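/- For every natural number i ≥ 0, there exist subspaces p₁, q₁, r₁, …, p_{i+1}, q_{i+1}, r_{i+1} of ℂ^{2^{i+1}} (i.e., of EuclideanSpace ℂ (Fin (2^{i+1}))) such that the iterated restricted distributivity test formula satisfies dim(α^{i+1}(p_{i+1},q_{i+1},r_{i+1})) = 1; in particular α^{i+1} is not identically ⊥ on ℂ^{2^{i+1}}. -/

import Mathlib

/-- The distributivity test formula `α(p,q,r) = (a ⊔ b) ⊓ (aᗮ ⊔ bᗮ)` where
`a = p ⊔ (q ⊓ r)` and `b = (p ⊔ q) ⊓ (p ⊔ r)`. -/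
noncomputable def distribTest {E : Type*} [NormedAddCommGroup E] [InnerProductSpace ℂ E]
    (p q r : Submodule ℂ E) : Submodule ℂ E :=
  ((p ⊔ (q ⊓ r)) ⊔ ((p ⊔ q) ⊓ (p ⊔ r))) ⊓ ((p ⊔ (q ⊓ r))ᗮ ⊔ ((p ⊔ q) ⊓ (p ⊔ r))ᗮ)

/-- The restriction `α|_γ(p,q,r)` of the distributivity test formula to `γ`:
write `α` in negation normal form `((p ⊔ q) ⊓ (p ⊔ r)) ⊓ (pᗮ ⊓ (qᗮ ⊔ rᗮ))` and
replace each variable `x` by `x ⊓ γ` and each negated variable `xᗮ` by `xᗮ ⊓ γ`. -/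
noncomputable def distribTestRes {E : Type*} [NormedAddCommGroup E] [InnerProductSpace ℂ E]
    (γ p q r : Submodule ℂ E) : Submodule ℂ E :=
  (((p ⊓ γ) ⊔ (q ⊓ γ)) ⊓ ((p ⊓ γ) ⊔ (r ⊓ γ))) ⊓ ((pᗮ ⊓ γ) ⊓ ((qᗮ ⊓ γ) ⊔ (rᗮ ⊓ γ)))

/-- The iterated restricted distributivity test formula:
`distribTestIter p q r m` is `α^(m+1)(p (m+1), q (m+1), r (m+1))`, where
`α¹(p₁,q₁,r₁) = α(p₁,q₁,r₁)` and `αᵐ(pₘ,qₘ,rₘ) = α|_(α^(m-1))(pₘ,qₘ,rₘ)`.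
The variables `pⱼ, qⱼ, rⱼ` (for `1 ≤ j ≤ m+1`) are given as `p j, q j, r j`. -/
noncomputable def distribTestIter {E : Type*} [NormedAddCommGroup E] [InnerProductSpace ℂ E]
    (p q r : ℕ → Submodule ℂ E) : ℕ → Submodule ℂ E
  | 0 => distribTest (p 1) (q 1) (r 1)
  | (m + 1) => distribTestRes (distribTestIter p q r m) (p (m + 2)) (q (m + 2)) (r (m + 2))

open Module Submodule

section Aux

variable {E : Type*} [NormedAddCommGroup E] [InnerProductSpace ℂ E]

lemma myMapOrthogonal (γ : Submodule ℂ E) (S : Submodule ℂ ↥γ) :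
    map γ.subtype Sᗮ = (map γ.subtype S)ᗮ ⊓ γ := by
  ext x
  simp only [Submodule.mem_map, Submodule.mem_inf, Submodule.mem_orthogonal]
  constructor
  · rintro ⟨y, hy, rfl⟩
    refine ⟨fun u hu => ?_, y.2⟩
    obtain ⟨v, hv, rfl⟩ := hu
    exact hy v hv
  · rintro ⟨hx, hxγ⟩
    exact ⟨⟨x, hxγ⟩, fun v hv => hx _ ⟨v, hv, rfl⟩, rfl⟩

lemma myOrthInf [FiniteDimensional ℂ E] (q r : Submodule ℂ E) : (q ⊓ r)ᗮ = qᗮ ⊔ rᗮ := by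
  conv_lhs => rw [← Submodule.orthogonal_orthogonal q, ← Submodule.orthogonal_orthogonal r,
    Submodule.inf_orthogonal, Submodule.orthogonal_orthogonal]

lemma myExistsSubmodule (k : ℕ) [FiniteDimensional ℂ E] (h : k ≤ finrank ℂ E) :
    ∃ γ : Submodule ℂ E, finrank ℂ γ = k := by
  refine ⟨span ℂ (Set.range ((Module.finBasis ℂ E) ∘ Fin.castLE h)), ?_⟩
  rw [finrank_span_eq_card ((Module.finBasis ℂ E).linearIndependent.comp _
    (Fin.castLE_injective h))]
  simp

/-- `α` in negation normal form, finite dimensions. -/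
lemma myNNF [FiniteDimensional ℂ E] (p q r : Submodule ℂ E) :
    distribTest p q r = ((p ⊔ q) ⊓ (p ⊔ r)) ⊓ (pᗮ ⊓ (qᗮ ⊔ rᗮ)) := by
  have hab : (p ⊔ (q ⊓ r)) ≤ ((p ⊔ q) ⊓ (p ⊔ r)) :=
    sup_le (le_inf le_sup_left le_sup_left)
      (le_inf (le_trans inf_le_left le_sup_right) (le_trans inf_le_right le_sup_right))
  unfold distribTest
  rw [sup_eq_right.2 hab, sup_eq_left.2 (Submodule.orthogonal_le hab),
    ← Submodule.inf_orthogonal, myOrthInf]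

/-- Restriction to `γ` of subspaces of `γ` is `α` computed inside `γ`. -/
lemma myResSelf [FiniteDimensional ℂ E] (γ : Submodule ℂ E) (P Q R : Submodule ℂ ↥γ) :
    distribTestRes γ (map γ.subtype P) (map γ.subtype Q) (map γ.subtype R)
      = map γ.subtype (distribTest P Q R) := by
  have hle : ∀ S : Submodule ℂ ↥γ, map γ.subtype S ⊓ γ = map γ.subtype S := fun S =>
    inf_eq_left.2 (map_subtype_le γ S)
  have horth : ∀ S : Submodule ℂ ↥γ, (map γ.subtype S)ᗮ ⊓ γ = map γ.subtype Sᗮ := fun S =>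
    (myMapOrthogonal γ S).symm
  rw [myNNF]
  unfold distribTestRes
  rw [hle P, hle Q, hle R, horth P, horth Q, horth R,
    ← Submodule.map_sup, ← Submodule.map_sup, ← Submodule.map_sup,
    ← Submodule.map_inf _ γ.injective_subtype, ← Submodule.map_inf _ γ.injective_subtype,
    ← Submodule.map_inf _ γ.injective_subtype]

/-- Restriction commutes with the lattice embedding `Submodule ℂ ↥γ → Submodule ℂ E`. -/
lemma myResMap (γ : Submodule ℂ E) (γ' P Q R : Submodule ℂ ↥γ) :
    distribTestRes (map γ.subtype γ') (map γ.subtype P) (map γ.subtype Q) (map γ.subtype R)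
      = map γ.subtype (distribTestRes γ' P Q R) := by
  have horth : ∀ S : Submodule ℂ ↥γ, (map γ.subtype S)ᗮ ⊓ map γ.subtype γ'
      = map γ.subtype (Sᗮ ⊓ γ') := fun S => by
    rw [Submodule.map_inf _ γ.injective_subtype, myMapOrthogonal, inf_assoc,
      inf_eq_right.2 (map_subtype_le γ γ')]
  unfold distribTestRes
  rw [horth P, horth Q, horth R,
    ← Submodule.map_inf _ γ.injective_subtype, ← Submodule.map_inf _ γ.injective_subtype,
    ← Submodule.map_inf _ γ.injective_subtype,
    ← Submodule.map_sup, ← Submodule.map_sup, ← Submodule.map_sup,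
    ← Submodule.map_inf _ γ.injective_subtype, ← Submodule.map_inf _ γ.injective_subtype,
    ← Submodule.map_inf _ γ.injective_subtype]

/-- The base computation: `α(γᗮ, γ, graph f) = γ`. -/
lemma myBase [FiniteDimensional ℂ E] (γ : Submodule ℂ E) (f : ↥γᗮ ≃ₗ[ℂ] ↥γ) :
    distribTest γᗮ γ
      (LinearMap.range (γᗮ.subtype + γ.subtype ∘ₗ (f : ↥γᗮ →ₗ[ℂ] ↥γ))) = γ := by
  set g : ↥γᗮ →ₗ[ℂ] E := γᗮ.subtype + γ.subtype ∘ₗ (f : ↥γᗮ →ₗ[ℂ] ↥γ) with hg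
  have hgapp : ∀ y : ↥γᗮ, g y = (y : E) + ((f y : ↥γ) : E) := fun y => rfl
  have hqr : γ ⊓ LinearMap.range g = ⊥ := by
    rw [eq_bot_iff]
    rintro x ⟨hx, y, rfl⟩
    have hy : (y : E) ∈ γ := by
      have : (y : E) = g y - ((f y : ↥γ) : E) := by rw [hgapp]; abel
      rw [this]
      exact γ.sub_mem hx (f y).2
    have : y = 0 := by
      have := Submodule.inf_orthogonal_eq_bot γ
      have hmem : (y : E) ∈ γ ⊓ γᗮ := ⟨hy, y.2⟩
      rw [this] at hmem
      exact Subtype.ext hmem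
    simp [this, hgapp]
  have hsup : γ ⊔ γᗮ = ⊤ := Submodule.sup_orthogonal_of_hasOrthogonalProjection
  have hpq : γᗮ ⊔ γ = ⊤ := by rw [sup_comm]; exact hsup
  have hpr : γᗮ ⊔ LinearMap.range g = ⊤ := by
    rw [eq_top_iff]
    intro e _
    have he : e ∈ γ ⊔ γᗮ := hsup ▸ Submodule.mem_top
    obtain ⟨v, hv, u, hu, rfl⟩ := Submodule.mem_sup.1 he
    have : v + u = g (f.symm ⟨v, hv⟩) + ((⟨u, hu⟩ : ↥γᗮ) - f.symm ⟨v, hv⟩ : ↥γᗮ) := by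
      rw [hgapp]
      simp only [LinearEquiv.apply_symm_apply]
      push_cast
      abel
    rw [this]
    exact Submodule.add_mem _ (Submodule.mem_sup_right ⟨_, rfl⟩)
      (Submodule.mem_sup_left (SetLike.coe_mem _))
  unfold distribTest
  rw [hqr, sup_bot_eq, hpq, hpr, inf_top_eq, sup_top_eq, Submodule.top_orthogonal_eq_bot,
    sup_bot_eq, Submodule.orthogonal_orthogonal, top_inf_eq]

lemma myKey (m : ℕ) : ∀ (E : Type) [NormedAddCommGroup E] [InnerProductSpace ℂ E]
    [FiniteDimensional ℂ E],
    finrank ℂ E = 2 ^ (m + 1) →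
    ∃ p q r : ℕ → Submodule ℂ E, finrank ℂ (distribTestIter p q r m) = 1 := by
  induction m with
  | zero =>
    intro E _ _ _ hE
    obtain ⟨γ, hγ⟩ := myExistsSubmodule 1 (by rw [hE]; norm_num)
    have hγo : finrank ℂ ↥γᗮ = 1 := by
      have := Submodule.finrank_add_finrank_orthogonal (K := γ)
      omega
    obtain ⟨f⟩ : Nonempty (↥γᗮ ≃ₗ[ℂ] ↥γ) :=
      FiniteDimensional.nonempty_linearEquiv_of_finrank_eq (by rw [hγ, hγo])
    exact ⟨fun _ => γᗮ, fun _ => γ,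
      fun _ => LinearMap.range (γᗮ.subtype + γ.subtype ∘ₗ (f : ↥γᗮ →ₗ[ℂ] ↥γ)),
      by
        show finrank ℂ ↥(distribTest γᗮ γ
          (LinearMap.range (γᗮ.subtype + γ.subtype ∘ₗ (f : ↥γᗮ →ₗ[ℂ] ↥γ)))) = 1
        rw [myBase]; exact hγ⟩
  | succ m ih =>
    intro E _ _ _ hE
    obtain ⟨γ, hγ⟩ := myExistsSubmodule (E := E) (2 ^ (m + 1)) (by
      rw [hE]; exact Nat.pow_le_pow_right (by norm_num) (by omega))
    obtain ⟨P, Q, R, hPQR⟩ := ih ↥γ (by rw [← hγ])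
    have hγo : finrank ℂ ↥γᗮ = 2 ^ (m + 1) := by
      have := Submodule.finrank_add_finrank_orthogonal (K := γ)
      have h2 : (2:ℕ) ^ (m + 2) = 2 ^ (m + 1) * 2 := by rw [pow_succ]
      omega
    obtain ⟨f⟩ : Nonempty (↥γᗮ ≃ₗ[ℂ] ↥γ) :=
      FiniteDimensional.nonempty_linearEquiv_of_finrank_eq (by rw [hγ, hγo])
    set p : ℕ → Submodule ℂ E := fun j => if j = 1 then γᗮ else map γ.subtype (P (j - 1))
    set q : ℕ → Submodule ℂ E := fun j => if j = 1 then γ else map γ.subtype (Q (j - 1))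
    set r : ℕ → Submodule ℂ E := fun j =>
      if j = 1 then LinearMap.range (γᗮ.subtype + γ.subtype ∘ₗ (f : ↥γᗮ →ₗ[ℂ] ↥γ))
      else map γ.subtype (R (j - 1))
    have h0 : distribTestIter p q r 0 = γ := by
      simp only [distribTestIter, p, q, r, if_pos rfl]
      exact myBase γ f
    have hstep : ∀ k, distribTestIter p q r (k + 1)
        = map γ.subtype (distribTestIter P Q R k) := by
      intro k
      induction k with
      | zero =>
        show distribTestRes (distribTestIter p q r 0) (p 2) (q 2) (r 2) = _
        rw [h0]
        simp only [p, q, r, if_neg (by norm_num : (2:ℕ) ≠ 1)]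
        exact myResSelf γ (P 1) (Q 1) (R 1)
      | succ k ihk =>
        show distribTestRes (distribTestIter p q r (k + 1)) (p (k + 3)) (q (k + 3))
            (r (k + 3)) = _
        rw [ihk]
        simp only [p, q, r, if_neg (by omega : k + 3 ≠ 1)]
        have : k + 3 - 1 = k + 2 := by omega
        rw [this]
        exact myResMap γ _ (P (k + 2)) (Q (k + 2)) (R (k + 2))
    refine ⟨p, q, r, ?_⟩
    rw [hstep m, Submodule.finrank_map_subtype_eq]
    exact hPQR

end Aux

theorem exists_distribTestIter_finrank_eq_one (i : ℕ) :
    ∃ p q r : ℕ → Submodule ℂ (EuclideanSpace ℂ (Fin (2 ^ (i + 1)))),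
      Module.finrank ℂ (distribTestIter p q r i) = 1 ∧
        distribTestIter p q r i ≠ ⊥ := by
  obtain ⟨p, q, r, h⟩ := myKey i (EuclideanSpace ℂ (Fin (2 ^ (i + 1)))) (by simp)
  refine ⟨p, q, r, h, fun hbot => ?_⟩
  rw [hbot] at h
  simp at h
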